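/- For any metric graph G with n vertices, weights in (0,1] including a vertex of weight 1, there exists a finite closed walk W of size O(n²) such that the cost of the infinite expansion Δ(W) is at most 6·OPT_G. -/

import Mathlib

open scoped ENNReal BigOperators

/-- Total edge length of the segment of the infinite walk `W` from index `a` to `b`. -/
noncomputable def walkLen {V : Type*} (l : V → V → ℝ≥0∞) (W : ℕ → V) (a b : ℕ) : ℝ≥0∞ :=
  ∑ i ∈ Finset.Ico a b, l (W i) (W (i + 1))

/-- The walk visits every vertex infinitely often. -/
def VisitsInfOften {V : Type*} (W : ℕ → V) : Prop :=
  ∀ v : V, ∀ N : ℕ, ∃ a : ℕ, N ≤ a ∧ W a = v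

/-- Latency of vertex `v` on infinite walk `W`: the supremum, over visits to `v`,
of the length of the sub-walk until the next visit to `v`. -/
noncomputable def latency {V : Type*} (l : V → V → ℝ≥0∞) (W : ℕ → V) (v : V) : ℝ≥0∞ :=
  ⨆ (a : ℕ) (_ : W a = v), ⨅ (b : ℕ) (_ : a < b ∧ W b = v), walkLen l W a b

/-- Cost of an infinite walk: the maximum weighted latency over all vertices. -/
noncomputable def walkCost {V : Type*} (l : V → V → ℝ≥0∞) (φ : V → ℝ≥0∞) (W : ℕ → V) : ℝ≥0∞ :=
  ⨆ v : V, φ v * latency l W v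

/-- Optimal cost over all infinite walks (complete graph) visiting all vertices
infinitely often. -/
noncomputable def OPT {V : Type*} (l : V → V → ℝ≥0∞) (φ : V → ℝ≥0∞) : ℝ≥0∞ :=
  ⨅ (W : ℕ → V) (_ : VisitsInfOften W), walkCost l φ W

attribute [local instance] Classical.propDecidable

section WalkLenBasic
variable {V : Type*} (l : V → V → ℝ≥0∞) (W : ℕ → V)

lemma walkLen_self (a : ℕ) : walkLen l W a a = 0 := by simp [walkLen]

lemma walkLen_succ_top {a b : ℕ} (h : a ≤ b) :
    walkLen l W a (b + 1) = walkLen l W a b + l (W b) (W (b + 1)) := by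
  rw [walkLen, Finset.sum_Ico_succ_top h]; rfl

lemma walkLen_one (a : ℕ) : walkLen l W a (a + 1) = l (W a) (W (a + 1)) := by
  rw [walkLen_succ_top l W le_rfl, walkLen_self, zero_add]

lemma walkLen_two (a : ℕ) :
    walkLen l W a (a + 2) = l (W a) (W (a + 1)) + l (W (a + 1)) (W (a + 2)) := by
  have h1 : a + 2 = (a + 1) + 1 := rfl
  rw [h1, walkLen_succ_top l W (by omega), walkLen_one]

lemma walkLen_add {a b c : ℕ} (h1 : a ≤ b) (h2 : b ≤ c) :
    walkLen l W a b + walkLen l W b c = walkLen l W a c :=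
  Finset.sum_Ico_consecutive _ h1 h2

lemma walkLen_mono_right {a b c : ℕ} (h1 : a ≤ b) (h2 : b ≤ c) :
    walkLen l W a b ≤ walkLen l W a c := by
  rw [← walkLen_add l W h1 h2]; exact le_self_add

lemma walkLen_mono_left {a b c : ℕ} (h1 : a ≤ b) (h2 : b ≤ c) :
    walkLen l W b c ≤ walkLen l W a c := by
  rw [← walkLen_add l W h1 h2]; exact le_add_self

lemma walkLen_le_walkLen {a a' b b' : ℕ} (h1 : a' ≤ a) (h2 : a ≤ b) (h3 : b ≤ b') :
    walkLen l W a b ≤ walkLen l W a' b' :=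
  le_trans (walkLen_mono_right l W h2 h3) (walkLen_mono_left l W h1 (le_trans h2 h3))

end WalkLenBasic

section WalkLenMetric
variable {V : Type*} [MetricSpace V] (W : ℕ → V)

lemma walkLen_ne_top (a b : ℕ) : walkLen (fun x y => edist x y) W a b ≠ ⊤ := by
  rw [walkLen]
  exact (ENNReal.sum_lt_top.mpr fun i _ => edist_lt_top _ _).ne

lemma edist_le_walkLen {a b : ℕ} (h : a ≤ b) :
    edist (W a) (W b) ≤ walkLen (fun x y => edist x y) W a b := by
  induction b with
  | zero =>
    have : a = 0 := by omega
    subst this; simp [walkLen_self]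
  | succ n ih =>
    rcases Nat.lt_or_ge a (n+1) with h' | h'
    · have ha : a ≤ n := by omega
      calc edist (W a) (W (n+1)) ≤ edist (W a) (W n) + edist (W n) (W (n+1)) :=
            edist_triangle _ _ _
        _ ≤ walkLen (fun x y => edist x y) W a n + edist (W n) (W (n+1)) :=
            add_le_add_left (ih ha) _
        _ = walkLen (fun x y => edist x y) W a (n+1) := (walkLen_succ_top _ _ ha).symm
    · have : a = n + 1 := le_antisymm h h'
      subst this; simp [walkLen_self]
end WalkLenMetric

section Periodic
variable {V : Type*} (l : V → V → ℝ≥0∞) (W : ℕ → V) {p : ℕ}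

lemma walkLen_shift_per (hper : ∀ i, W (i + p) = W i) (a b : ℕ) :
    walkLen l W (a + p) (b + p) = walkLen l W a b := by
  unfold walkLen
  rw [Finset.sum_Ico_eq_sum_range, Finset.sum_Ico_eq_sum_range]
  have hlen : b + p - (a + p) = b - a := by omega
  rw [hlen]
  refine Finset.sum_congr rfl fun i _ => ?_
  rw [show a + p + i = (a + i) + p by omega, hper,
    show a + i + p + 1 = (a + i + 1) + p by omega, hper]

lemma walkLen_shift_mult (hper : ∀ i, W (i + p) = W i) (a b m : ℕ) :
    walkLen l W (a + p * m) (b + p * m) = walkLen l W a b := by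
  induction m with
  | zero => simp
  | succ k ih =>
    have h1 : a + p * (k + 1) = (a + p * k) + p := by ring
    have h2 : b + p * (k + 1) = (b + p * k) + p := by ring
    rw [h1, h2, walkLen_shift_per l W hper, ih]

lemma per_mult (hper : ∀ i, W (i + p) = W i) (a m : ℕ) : W (a + p * m) = W a := by
  induction m with
  | zero => simp
  | succ k ih => have h1 : a + p * (k + 1) = (a + p * k) + p := by ring
                 rw [h1, hper, ih]

lemma latency_le_of_returns {v : V} {B : ℝ≥0∞}
    (H : ∀ a, W a = v → ∃ b, a < b ∧ W b = v ∧ walkLen l W a b ≤ B) :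
    latency l W v ≤ B := by
  refine iSup₂_le fun a ha => ?_
  obtain ⟨b, h1, h2, h3⟩ := H a ha
  exact iInf₂_le_of_le b ⟨h1, h2⟩ h3

lemma latency_le_of_periodic_returns (hp : 0 < p) (hper : ∀ i, W (i + p) = W i)
    {v : V} {B : ℝ≥0∞}
    (H : ∀ j, j < p → W j = v → ∃ k, j < k ∧ W k = v ∧ walkLen l W j k ≤ B) :
    latency l W v ≤ B := by
  refine latency_le_of_returns l W fun a ha => ?_
  have hsplit : a % p + p * (a / p) = a := Nat.mod_add_div a p
  have hmod : W a = W (a % p) := by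
    conv_lhs => rw [← hsplit]
    exact per_mult W hper _ _
  obtain ⟨k, hk1, hk2, hk3⟩ := H (a % p) (Nat.mod_lt _ hp) (hmod ▸ ha)
  have hle : a % p ≤ k := le_of_lt hk1
  have key : a + (k - a % p) = k + p * (a / p) := by omega
  refine ⟨a + (k - a % p), by omega, ?_, ?_⟩
  · rw [key, per_mult W hper]; exact hk2
  · calc walkLen l W a (a + (k - a % p))
        = walkLen l W (a % p + p * (a/p)) (k + p * (a/p)) := by rw [hsplit, ← key]
      _ = walkLen l W (a % p) k := walkLen_shift_mult l W hper _ _ _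
      _ ≤ B := hk3

lemma walkLen_rotate (hper : ∀ i, W (i + p) = W i) (j : ℕ) :
    walkLen l W j (j + p) = walkLen l W 0 p := by
  induction j with
  | zero => simp
  | succ n ih =>
    rw [← ih]
    rcases Nat.eq_zero_or_pos p with hp | hp
    · simp [hp, walkLen_self]
    have h1 : walkLen l W n (n + p) = l (W n) (W (n+1)) + walkLen l W (n+1) (n + p) := by
      rw [walkLen, Finset.sum_eq_sum_Ico_succ_bot (by omega)]; rfl
    have h2 : walkLen l W (n+1) (n+1+p) = walkLen l W (n+1) (n+p) + l (W (n+p)) (W (n+p+1)) := by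
      rw [show n + 1 + p = (n + p) + 1 by omega, walkLen, Finset.sum_Ico_succ_top (by omega)]; rfl
    rw [h1, h2]
    have e1 : W (n + p) = W n := hper n
    have e2 : W (n + p + 1) = W (n + 1) := by
      rw [show n + p + 1 = (n + 1) + p by omega, hper]
    rw [e1, e2, add_comm]

lemma le_latency_of_visit {v : V} {a : ℕ} (ha : W a = v) {D : ℝ≥0∞}
    (H : ∀ b, a < b → W b = v → D ≤ walkLen l W a b) : D ≤ latency l W v := by
  refine le_iSup₂_of_le a ha ?_
  exact le_iInf₂ fun b hb => H b hb.1 hb.2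

lemma return_of_latency_lt {v : V} {B : ℝ≥0∞} (hlat : latency l W v < B) {a : ℕ}
    (ha : W a = v) : ∃ b, a < b ∧ W b = v ∧ walkLen l W a b < B := by
  have h1 : (⨅ (b : ℕ) (_ : a < b ∧ W b = v), walkLen l W a b) < B :=
    lt_of_le_of_lt (le_iSup₂ (f := fun a _ => ⨅ (b : ℕ) (_ : a < b ∧ W b = v), walkLen l W a b) a ha) hlat
  obtain ⟨b, hb⟩ := iInf_lt_iff.mp h1
  obtain ⟨hb', hval⟩ := iInf_lt_iff.mp hb
  exact ⟨b, hb'.1, hb'.2, hval⟩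
end Periodic
section witness
variable {V : Type*} [MetricSpace V]


/-- key excursion lower bound for arbitrary walks -/
lemma excursion_lb (h : ℕ → V) (hVIO : VisitsInfOften h) (u x : V) (hx : x ≠ u) :
    2 * edist u x ≤ latency (fun a b => edist a b) h u := by
  obtain ⟨t0, -, ht0⟩ := hVIO u 0
  obtain ⟨b1, hb1ge, hb1⟩ := hVIO x (t0 + 1)
  set P := fun t => h t = u with hP
  have hPt0 : P t0 := ht0
  have ht0le : t0 ≤ b1 := by omega
  set r := Nat.findGreatest P b1 with hr
  have hPr : P r := Nat.findGreatest_spec ht0le hPt0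
  have hrle : r ≤ b1 := Nat.findGreatest_le _
  have hrne : r ≠ b1 := by
    intro he; apply hx; rw [← hb1, ← he]; exact hPr
  have hrlt : r < b1 := lt_of_le_of_ne hrle hrne
  refine le_latency_of_visit _ h hPr fun b hb hbu => ?_
  have hbgt : b1 < b := by
    rcases Nat.lt_or_ge b1 b with h' | h'
    · exact h'
    · exfalso
      exact Nat.findGreatest_is_greatest hb h' hbu
  calc 2 * edist u x = edist u x + edist x u := by rw [two_mul, edist_comm]
    _ = edist (h r) (h b1) + edist (h b1) (h b) := by rw [hPr, hb1, hbu]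
    _ ≤ walkLen (fun x y => edist x y) h r b1 + walkLen (fun x y => edist x y) h b1 b := by
        exact add_le_add (edist_le_walkLen h hrlt.le) (edist_le_walkLen h hbgt.le)
    _ = walkLen (fun x y => edist x y) h r b := walkLen_add _ h hrlt.le hbgt.le

/-- strict forward window visit -/
lemma window_visit (f : ℕ → V) {g : V → ℝ≥0∞}
    (hret : ∀ v a, f a = v → ∃ b, a < b ∧ f b = v ∧ walkLen (fun x y => edist x y) f a b ≤ g v)
    {a0 : ℕ} (ha0 : ∀ v : V, ∃ t, t ≤ a0 ∧ f t = v) (v : V) (a : ℕ) (ha : a0 ≤ a) :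
    ∃ b, a < b ∧ f b = v ∧ walkLen (fun x y => edist x y) f a b ≤ g v := by
  set P := fun t => f t = v with hP
  obtain ⟨t, ht, htv⟩ := ha0 v
  set r := Nat.findGreatest P a with hr
  have hPr : P r := Nat.findGreatest_spec (le_trans ht ha) htv
  have hrle : r ≤ a := Nat.findGreatest_le _
  obtain ⟨b, hrb, hbv, hlen⟩ := hret v r hPr
  have hba : a < b := by
    rcases Nat.lt_or_ge a b with h' | h'
    · exact h'
    · exfalso; exact Nat.findGreatest_is_greatest hrb h' hbv
  exact ⟨b, hba, hbv, le_trans (walkLen_mono_left _ f hrle hba.le) hlen⟩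

/-- movement: walks visiting two distinct vertices i.o. have unbounded length -/
lemma reach_lb (f : ℕ → V) (hVIO : VisitsInfOften f) (u x0 : V) (hne : x0 ≠ u) :
    ∀ (a : ℕ) (x : ℝ≥0∞), x ≠ ⊤ → ∃ t, a ≤ t ∧ x ≤ walkLen (fun x y => edist x y) f a t := by
  intro a x hx
  set ε := edist u x0 with hε
  have hε0 : ε ≠ 0 := by
    simpa [hε] using (edist_pos.mpr (Ne.symm hne)).ne'
  have main : ∀ k : ℕ, ∃ t, a ≤ t ∧ (k : ℝ≥0∞) * ε ≤ walkLen (fun x y => edist x y) f a t := by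
    intro k
    induction k with
    | zero => exact ⟨a, le_rfl, by simp⟩
    | succ n ih =>
      obtain ⟨t, hat, hlen⟩ := ih
      obtain ⟨t1, ht1ge, ht1⟩ := hVIO u t
      obtain ⟨t2, ht2ge, ht2⟩ := hVIO x0 t1
      refine ⟨t2, by omega, ?_⟩
      have step : ε ≤ walkLen (fun x y => edist x y) f t t2 := by
        calc ε = edist (f t1) (f t2) := by rw [ht1, ht2]
          _ ≤ walkLen (fun x y => edist x y) f t1 t2 := edist_le_walkLen f ht2ge
          _ ≤ walkLen (fun x y => edist x y) f t t2 := walkLen_mono_left _ f ht1ge (by omega)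
      calc ((n+1 : ℕ) : ℝ≥0∞) * ε = (n : ℝ≥0∞) * ε + ε := by push_cast; ring
        _ ≤ walkLen (fun x y => edist x y) f a t + walkLen (fun x y => edist x y) f t t2 :=
            add_le_add hlen step
        _ = walkLen (fun x y => edist x y) f a t2 := walkLen_add _ f hat (by omega)
  have hdivT : x / ε ≠ ⊤ := by
    rw [Ne, ENNReal.div_eq_top]
    push_neg
    exact ⟨fun _ => hε0, fun hxT => absurd hxT hx⟩
  obtain ⟨k, hk⟩ := ENNReal.exists_nat_gt hdivT
  obtain ⟨t, hat, hlen⟩ := main k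
  refine ⟨t, hat, le_trans ?_ hlen⟩
  have h2 : x < (k : ℝ≥0∞) * ε := by
    have h3 := (ENNReal.div_lt_iff (Or.inl hε0) (Or.inr hx)).mp hk
    exact lt_of_lt_of_eq h3 (by ring)
  exact h2.le

/-- constant walk has latency 0 -/
lemma latency_const (u : V) (v : V) : latency (fun x y => edist x y) (fun _ => u) v = 0 := by
  refine le_antisymm ?_ (zero_le)
  refine iSup₂_le fun a ha => ?_
  refine iInf₂_le_of_le (a+1) ⟨by omega, ha⟩ ?_
  have : walkLen (fun x y => edist x y) (fun _ : ℕ => u) a (a+1) = edist u u := by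
    rw [walkLen]; simp [Finset.sum_Ico_succ_top]
  simp [this]
end witness


structure BGTSetup (V : Type*) [MetricSpace V] [Fintype V] where
  f : ℕ → V
  u : V
  φ : V → ℝ≥0∞
  g : V → ℝ≥0∞
  q : ℝ≥0∞
  hq0 : q ≠ 0
  hqT : q ≠ ⊤
  a0 : ℕ
  ha0 : ∀ v, ∃ t, t ≤ a0 ∧ f t = v
  hgq : ∀ v, 100 * q ≤ g v
  hgT : ∀ v, g v ≠ ⊤
  hgu : g u ≤ 100 * q
  hphi1 : ∀ v, φ v ≤ 1
  hphig : ∀ v, φ v * g v ≤ 100 * q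
  hwin : ∀ v a, a0 ≤ a → ∃ b, a < b ∧ f b = v ∧ walkLen (fun x y => edist x y) f a b ≤ g v
  hball : ∀ x, 2 * edist u x ≤ 100 * q
  hmove : ∀ (a : ℕ) (x : ℝ≥0∞), x ≠ ⊤ → ∃ t, a ≤ t ∧ x ≤ walkLen (fun x y => edist x y) f a t

namespace BGTSetup
variable {V : Type*} [MetricSpace V] [Fintype V] (S : BGTSetup V)

local notation "WL" => walkLen (fun x y : V => edist x y)

noncomputable def P0 : ℕ := (S.hwin S.u S.a0 le_rfl).choose

lemma a0_lt_P0 : S.a0 < S.P0 := (S.hwin S.u S.a0 le_rfl).choose_spec.1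
lemma f_P0 : S.f S.P0 = S.u := (S.hwin S.u S.a0 le_rfl).choose_spec.2.1

noncomputable def lev (t : ℕ) : ℝ≥0∞ := WL S.f S.P0 t

lemma lev_mono {t t' : ℕ} (h : t ≤ t') : S.lev t ≤ S.lev t' := by
  unfold lev walkLen
  exact Finset.sum_le_sum_of_subset (Finset.Ico_subset_Ico le_rfl h)

lemma lev_ne_top (t : ℕ) : S.lev t ≠ ⊤ := walkLen_ne_top _ _ _

lemma lev_add {a b : ℕ} (h1 : S.P0 ≤ a) (h2 : a ≤ b) :
    S.lev a + WL S.f a b = S.lev b := walkLen_add _ _ h1 h2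

lemma lev_P0 : S.lev S.P0 = 0 := walkLen_self _ _ _

lemma edist_u_le (x : V) : edist S.u x ≤ 50 * S.q := by
  have h := S.hball x
  have h2 : 2 * edist S.u x ≤ 2 * (50 * S.q) := by
    calc 2 * edist S.u x ≤ 100 * S.q := h
      _ = 2 * (50 * S.q) := by ring
  exact (ENNReal.mul_le_mul_iff_right (two_ne_zero) (by norm_num)).mp h2

lemma edist_le_diam (x y : V) : edist x y ≤ 100 * S.q := by
  calc edist x y ≤ edist x S.u + edist S.u y := edist_triangle _ _ _
    _ = edist S.u x + edist S.u y := by rw [edist_comm x S.u]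
    _ ≤ 50 * S.q + 50 * S.q := add_le_add (S.edist_u_le x) (S.edist_u_le y)
    _ = 100 * S.q := by ring

lemma lev_succ_le (t : ℕ) : S.lev (t + 1) ≤ S.lev t + 100 * S.q := by
  rcases Nat.lt_or_ge t S.P0 with h | h
  · have : t + 1 ≤ S.P0 ∨ t + 1 = S.P0 + 0 := by omega
    have h1 : S.lev (t+1) ≤ S.lev S.P0 := S.lev_mono (by omega)
    rw [S.lev_P0] at h1
    exact le_trans h1 (zero_le)
  · have := walkLen_succ_top (fun x y : V => edist x y) S.f h
    unfold lev
    rw [this]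
    exact add_le_add_right (S.edist_le_diam _ _) _

noncomputable def tau (x : ℝ≥0∞) : ℕ :=
  if hx : x = ⊤ then S.P0 else Nat.find (S.hmove S.P0 x hx)

lemma P0_le_tau (x : ℝ≥0∞) : S.P0 ≤ S.tau x := by
  unfold tau
  split_ifs with hx
  · exact le_rfl
  · exact (Nat.find_spec (S.hmove S.P0 x hx)).1

lemma le_lev_tau {x : ℝ≥0∞} (hx : x ≠ ⊤) : x ≤ S.lev (S.tau x) := by
  unfold tau
  rw [dif_neg hx]
  exact (Nat.find_spec (S.hmove S.P0 x hx)).2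

lemma le_tau_of_lev_lt {x : ℝ≥0∞} (hx : x ≠ ⊤) {t : ℕ} (h : S.lev t < x) : t ≤ S.tau x := by
  by_contra hc
  push_neg at hc
  exact absurd (le_trans (S.le_lev_tau hx) (S.lev_mono hc.le)) (not_le.mpr h)

lemma lev_tau_le {x : ℝ≥0∞} (hx : x ≠ ⊤) : S.lev (S.tau x) ≤ x + 100 * S.q := by
  unfold tau
  rw [dif_neg hx]
  set t := Nat.find (S.hmove S.P0 x hx) with ht
  rcases Nat.lt_or_ge S.P0 t with h | h
  · have hmin := Nat.find_min (S.hmove S.P0 x hx) (m := t - 1) (by omega)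
    push_neg at hmin
    have h1 : S.P0 ≤ t - 1 := by omega
    have h2 := hmin h1
    have h3 : S.lev t ≤ S.lev (t-1) + 100 * S.q := by
      have := S.lev_succ_le (t-1)
      rwa [show t - 1 + 1 = t by omega] at this
    exact le_trans h3 (add_le_add_left h2.le _)
  · have h0 : t ≤ S.P0 := h
    have : S.lev t ≤ S.lev S.P0 := S.lev_mono h0
    rw [S.lev_P0] at this
    exact le_trans this (zero_le)

lemma a0_le_tau (x : ℝ≥0∞) : S.a0 ≤ S.tau x := le_trans S.a0_lt_P0.le (S.P0_le_tau x)

noncomputable def visAt (v : V) (x : ℝ≥0∞) : ℕ := (S.hwin v (S.tau x) (S.a0_le_tau x)).choose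

lemma tau_lt_visAt (v : V) (x : ℝ≥0∞) : S.tau x < S.visAt v x :=
  (S.hwin v (S.tau x) (S.a0_le_tau x)).choose_spec.1
lemma f_visAt (v : V) (x : ℝ≥0∞) : S.f (S.visAt v x) = v :=
  (S.hwin v (S.tau x) (S.a0_le_tau x)).choose_spec.2.1
lemma WL_tau_visAt (v : V) (x : ℝ≥0∞) : WL S.f (S.tau x) (S.visAt v x) ≤ S.g v :=
  (S.hwin v (S.tau x) (S.a0_le_tau x)).choose_spec.2.2
lemma P0_lt_visAt (v : V) (x : ℝ≥0∞) : S.P0 < S.visAt v x :=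
  lt_of_le_of_lt (S.P0_le_tau x) (S.tau_lt_visAt v x)

lemma lev_visAt_le (v : V) {x : ℝ≥0∞} (hx : x ≠ ⊤) :
    S.lev (S.visAt v x) ≤ x + 100 * S.q + S.g v := by
  have h1 := S.lev_add (S.P0_le_tau x) (S.tau_lt_visAt v x).le
  rw [← h1]
  exact add_le_add (S.lev_tau_le hx) (S.WL_tau_visAt v x)

lemma le_lev_visAt (v : V) {x : ℝ≥0∞} (hx : x ≠ ⊤) : x ≤ S.lev (S.visAt v x) :=
  le_trans (S.le_lev_tau hx) (S.lev_mono (S.tau_lt_visAt v x).le)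

lemma tau_zero : S.tau 0 = S.P0 := by
  unfold tau
  rw [dif_neg (by simp : (0:ℝ≥0∞) ≠ ⊤)]
  rw [Nat.find_eq_iff]
  exact ⟨⟨le_rfl, zero_le⟩, fun n hn hcon => absurd hcon.1 (by omega)⟩

lemma lev_visAt_zero (v : V) : S.lev (S.visAt v 0) ≤ S.g v := by
  have h1 : S.lev (S.tau 0) + WL S.f (S.tau 0) (S.visAt v 0) = S.lev (S.visAt v 0) :=
    S.lev_add (S.P0_le_tau 0) (S.tau_lt_visAt v 0).le
  rw [← h1, S.tau_zero, S.lev_P0, zero_add]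
  have h2 := S.WL_tau_visAt v 0
  rwa [S.tau_zero] at h2
end BGTSetup

section consts
variable {V : Type*} [MetricSpace V] [Fintype V] (S : BGTSetup V)
namespace BGTSetup
local notation "WL" => walkLen (fun x y : V => edist x y)

lemma qmul_ne_top (a : ℕ) : ((a : ℝ≥0∞) * S.q) ≠ ⊤ :=
  ENNReal.mul_ne_top (by simp) S.hqT

lemma qmul_le_qmul {a b : ℕ} (h : a ≤ b) : (a : ℝ≥0∞) * S.q ≤ (b : ℝ≥0∞) * S.q :=
  mul_le_mul_left (by exact_mod_cast h) _

lemma qmul_lt_qmul {a b : ℕ} (h : a < b) : (a : ℝ≥0∞) * S.q < (b : ℝ≥0∞) * S.q :=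
  (ENNReal.mul_lt_mul_iff_left S.hq0 S.hqT).mpr (by exact_mod_cast h)

lemma lt_of_qmul_lt {a b : ℕ} (h : (a : ℝ≥0∞) * S.q < (b : ℝ≥0∞) * S.q) : a < b := by
  have := (ENNReal.mul_lt_mul_iff_left S.hq0 S.hqT).mp h
  exact_mod_cast this

lemma hundredq (a : ℕ) : (100 : ℝ≥0∞) * S.q = ((100 : ℕ) : ℝ≥0∞) * S.q := by norm_num

noncomputable def Lam : ℝ≥0∞ := ((10000 * (Fintype.card V + 2) : ℕ) : ℝ≥0∞) * S.q

lemma Lam_ne_top : S.Lam ≠ ⊤ := S.qmul_ne_top _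

noncomputable def tickLevel (j : ℕ) : ℝ≥0∞ := ((25 * j : ℕ) : ℝ≥0∞) * S.q
noncomputable def ankLevel (t : ℕ) : ℝ≥0∞ := ((10000 * (t + 1) : ℕ) : ℝ≥0∞) * S.q

lemma tickLevel_ne_top (j : ℕ) : S.tickLevel j ≠ ⊤ := S.qmul_ne_top _
lemma ankLevel_ne_top (t : ℕ) : S.ankLevel t ≠ ⊤ := S.qmul_ne_top _

noncomputable def anch (t : ℕ) : ℕ := S.visAt S.u (S.ankLevel t)
noncomputable def bpos (v : V) (j : ℕ) : ℕ := S.visAt v (S.tickLevel j)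

lemma f_anch (t : ℕ) : S.f (S.anch t) = S.u := S.f_visAt _ _
lemma f_bpos (v : V) (j : ℕ) : S.f (S.bpos v j) = v := S.f_visAt _ _

lemma lev_anch_ge (t : ℕ) : ((10000 * (t + 1) : ℕ) : ℝ≥0∞) * S.q ≤ S.lev (S.anch t) :=
  S.le_lev_visAt _ (S.ankLevel_ne_top t)

lemma lev_anch_le (t : ℕ) : S.lev (S.anch t) ≤ ((10000 * (t + 1) + 200 : ℕ) : ℝ≥0∞) * S.q := by
  have h := S.lev_visAt_le S.u (S.ankLevel_ne_top t)
  calc S.lev (S.anch t) ≤ S.ankLevel t + 100 * S.q + S.g S.u := h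
    _ ≤ S.ankLevel t + 100 * S.q + 100 * S.q := add_le_add_right S.hgu _
    _ = ((10000 * (t + 1) + 200 : ℕ) : ℝ≥0∞) * S.q := by
        unfold ankLevel; push_cast; ring

lemma anch_strictMono {s t : ℕ} (h : s < t) : S.anch s < S.anch t := by
  have h1 : S.lev (S.anch s) < S.lev (S.anch t) := by
    calc S.lev (S.anch s) ≤ ((10000 * (s + 1) + 200 : ℕ) : ℝ≥0∞) * S.q := S.lev_anch_le s
      _ < ((10000 * (t + 1) : ℕ) : ℝ≥0∞) * S.q := S.qmul_lt_qmul (by nlinarith)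
      _ ≤ S.lev (S.anch t) := S.lev_anch_ge t
  by_contra hc
  push_neg at hc
  exact absurd (S.lev_mono hc) (not_le.mpr h1)

lemma anch_injective : Function.Injective S.anch := by
  intro s t h
  rcases lt_trichotomy s t with h' | h' | h'
  · exact absurd h (ne_of_lt (S.anch_strictMono h'))
  · exact h'
  · exact absurd h.symm (ne_of_lt (S.anch_strictMono h'))

/-- vertex `v` is scheduled at tick `j` -/
def TicksOK (v : V) (j : ℕ) : Prop :=
  ((25 * j + 100 : ℕ) : ℝ≥0∞) * S.q + S.g v < S.Lam

def Heavy (v : V) : Prop := S.TicksOK v 0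

noncomputable def tinyL : List V := (Finset.univ.filter (fun v => ¬ S.Heavy v)).toList

noncomputable def m : ℕ := S.tinyL.length

lemma m_le_card : S.m ≤ Fintype.card V := by
  unfold m tinyL
  rw [Finset.length_toList]
  exact le_trans (Finset.card_filter_le _ _) (le_of_eq (Finset.card_univ))

lemma mem_tinyL_iff {v : V} : v ∈ S.tinyL ↔ ¬ S.Heavy v := by
  unfold tinyL
  rw [Finset.mem_toList, Finset.mem_filter]
  simp

noncomputable def Pend : ℕ := S.tau S.Lam

lemma ticks_lt {v : V} {j : ℕ} (h : S.TicksOK v j) : j < 400 * (Fintype.card V + 2) := by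
  unfold TicksOK at h
  have h1 : ((25 * j : ℕ) : ℝ≥0∞) * S.q < S.Lam := by
    calc ((25 * j : ℕ) : ℝ≥0∞) * S.q ≤ ((25 * j + 100 : ℕ) : ℝ≥0∞) * S.q :=
          S.qmul_le_qmul (by omega)
      _ ≤ ((25 * j + 100 : ℕ) : ℝ≥0∞) * S.q + S.g v := le_self_add
      _ < S.Lam := h
  unfold Lam at h1
  have := S.lt_of_qmul_lt h1
  omega

noncomputable def Kept : Finset ℕ :=
  insert S.P0 (insert S.Pend
    (((Finset.range S.m).image S.anch) ∪
      Finset.univ.biUnion (fun v =>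
        ((Finset.range (400 * (Fintype.card V + 2))).filter
          (fun j => S.TicksOK v j)).image (fun j => S.bpos v j))))

lemma P0_mem : S.P0 ∈ S.Kept := Finset.mem_insert_self _ _
lemma Pend_mem : S.Pend ∈ S.Kept := Finset.mem_insert_of_mem (Finset.mem_insert_self _ _)

lemma anch_mem {t : ℕ} (h : t < S.m) : S.anch t ∈ S.Kept := by
  apply Finset.mem_insert_of_mem
  apply Finset.mem_insert_of_mem
  apply Finset.mem_union_left
  exact Finset.mem_image_of_mem _ (Finset.mem_range.mpr h)

lemma bpos_mem {v : V} {j : ℕ} (h : S.TicksOK v j) : S.bpos v j ∈ S.Kept := by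
  apply Finset.mem_insert_of_mem
  apply Finset.mem_insert_of_mem
  apply Finset.mem_union_right
  refine Finset.mem_biUnion.mpr ⟨v, Finset.mem_univ _, ?_⟩
  exact Finset.mem_image_of_mem _ (Finset.mem_filter.mpr ⟨Finset.mem_range.mpr (S.ticks_lt h), h⟩)

lemma card_Kept : S.Kept.card ≤ 2 + Fintype.card V +
    Fintype.card V * (400 * (Fintype.card V + 2)) := by
  unfold Kept
  refine le_trans (Finset.card_insert_le _ _) ?_
  have h2 : (insert S.Pend (((Finset.range S.m).image S.anch) ∪
      Finset.univ.biUnion (fun v =>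
        ((Finset.range (400 * (Fintype.card V + 2))).filter
          (fun j => S.TicksOK v j)).image (fun j => S.bpos v j)))).card ≤
      1 + (Fintype.card V + Fintype.card V * (400 * (Fintype.card V + 2))) := by
    refine le_trans (Finset.card_insert_le _ _) ?_
    have h3 : (((Finset.range S.m).image S.anch) ∪
      Finset.univ.biUnion (fun v =>
        ((Finset.range (400 * (Fintype.card V + 2))).filter
          (fun j => S.TicksOK v j)).image (fun j => S.bpos v j))).card ≤
        Fintype.card V + Fintype.card V * (400 * (Fintype.card V + 2)) := by
      refine le_trans (Finset.card_union_le _ _) (add_le_add ?_ ?_)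
      · exact le_trans (Finset.card_image_le) (by
          rw [Finset.card_range]; exact S.m_le_card)
      · refine le_trans (Finset.card_biUnion_le) ?_
        calc (∑ v : V, (((Finset.range (400 * (Fintype.card V + 2))).filter
              (fun j => S.TicksOK v j)).image (fun j => S.bpos v j)).card)
            ≤ ∑ _v : V, 400 * (Fintype.card V + 2) := by
              refine Finset.sum_le_sum fun v _ => ?_
              refine le_trans (Finset.card_image_le) ?_
              refine le_trans (Finset.card_filter_le _ _) ?_
              rw [Finset.card_range]
          _ = Fintype.card V * (400 * (Fintype.card V + 2)) := by
              rw [Finset.sum_const, Finset.card_univ, smul_eq_mul]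
    omega
  omega

lemma Kept_ge {s : ℕ} (h : s ∈ S.Kept) : S.P0 ≤ s := by
  unfold Kept at h
  simp only [Finset.mem_insert, Finset.mem_union, Finset.mem_image, Finset.mem_biUnion,
    Finset.mem_range, Finset.mem_filter] at h
  rcases h with h | h | h | h
  · omega
  · rw [h]; exact S.P0_le_tau _
  · obtain ⟨t, -, ht⟩ := h
    rw [← ht]
    exact (S.P0_lt_visAt _ _).le
  · obtain ⟨v, -, j, -, hj⟩ := h
    rw [← hj]
    exact (S.P0_lt_visAt _ _).le

lemma lev_lt_Lam_of_TicksOK {v : V} {j : ℕ} (h : S.TicksOK v j) :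
    S.lev (S.bpos v j) < S.Lam := by
  calc S.lev (S.bpos v j) ≤ S.tickLevel j + 100 * S.q + S.g v :=
        S.lev_visAt_le v (S.tickLevel_ne_top j)
    _ = ((25 * j + 100 : ℕ) : ℝ≥0∞) * S.q + S.g v := by
        unfold tickLevel; push_cast; ring_nf
    _ < S.Lam := h

lemma lev_anch_lt_Lam {t : ℕ} (h : t < S.m) : S.lev (S.anch t) < S.Lam := by
  have h1 : t + 1 ≤ Fintype.card V := by
    have := S.m_le_card; omega
  calc S.lev (S.anch t) ≤ ((10000 * (t + 1) + 200 : ℕ) : ℝ≥0∞) * S.q := S.lev_anch_le t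
    _ < ((10000 * (Fintype.card V + 2) : ℕ) : ℝ≥0∞) * S.q := S.qmul_lt_qmul (by nlinarith)
    _ = S.Lam := rfl

lemma Kept_le {s : ℕ} (h : s ∈ S.Kept) : s ≤ S.Pend := by
  unfold Kept at h
  simp only [Finset.mem_insert, Finset.mem_union, Finset.mem_image, Finset.mem_biUnion,
    Finset.mem_range, Finset.mem_filter] at h
  rcases h with h | h | h | h
  · rw [h]; exact S.P0_le_tau _
  · omega
  · obtain ⟨t, ht, hts⟩ := h
    rw [← hts]
    exact S.le_tau_of_lev_lt S.Lam_ne_top (S.lev_anch_lt_Lam ht)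
  · obtain ⟨v, -, j, hj, hjs⟩ := h
    rw [← hjs]
    exact S.le_tau_of_lev_lt S.Lam_ne_top (S.lev_lt_Lam_of_TicksOK hj.2)

lemma lev_Pend_le : S.lev S.Pend ≤ S.Lam + 100 * S.q := S.lev_tau_le S.Lam_ne_top

noncomputable def M : ℕ := S.Kept.card
noncomputable def Ls : List ℕ := S.Kept.sort (· ≤ ·)
noncomputable def e (k : ℕ) : ℕ := S.Ls.getD k S.P0

lemma Ls_length : S.Ls.length = S.M := Finset.length_sort _
lemma M_pos : 0 < S.M := Finset.card_pos.mpr ⟨S.P0, S.P0_mem⟩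

lemma e_eq_get {k : ℕ} (h : k < S.M) : S.e k = S.Ls.get ⟨k, by rw [S.Ls_length]; exact h⟩ := by
  unfold e
  exact List.getD_eq_getElem _ _ _

lemma e_mem {k : ℕ} (h : k < S.M) : S.e k ∈ S.Kept := by
  rw [S.e_eq_get h]
  exact (Finset.mem_sort (· ≤ ·)).mp (List.get_mem _ _)

lemma e_lt_e {k k' : ℕ} (h : k < k') (h2 : k' < S.M) : S.e k < S.e k' := by
  rw [S.e_eq_get (lt_trans h h2), S.e_eq_get h2]
  exact (Finset.sortedLT_sort _).strictMono_get (by exact h)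

lemma e_le_e {k k' : ℕ} (h : k ≤ k') (h2 : k' < S.M) : S.e k ≤ S.e k' := by
  rcases eq_or_lt_of_le h with rfl | h'
  · exact le_rfl
  · exact (S.e_lt_e h' h2).le

lemma exists_e {s : ℕ} (h : s ∈ S.Kept) : ∃ k, k < S.M ∧ S.e k = s := by
  have h1 : s ∈ S.Ls := (Finset.mem_sort (· ≤ ·)).mpr h
  obtain ⟨⟨k, hk⟩, hget⟩ := List.mem_iff_get.mp h1
  refine ⟨k, by rw [← S.Ls_length]; exact hk, ?_⟩
  rw [S.e_eq_get (by rw [← S.Ls_length]; exact hk)]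
  exact hget

lemma e_zero : S.e 0 = S.P0 := by
  obtain ⟨k0, hk0, hk0e⟩ := S.exists_e S.P0_mem
  have h1 : S.P0 ≤ S.e 0 := S.Kept_ge (S.e_mem S.M_pos)
  have h2 : S.e 0 ≤ S.e k0 := S.e_le_e (by omega) hk0
  rw [hk0e] at h2
  omega

lemma e_last : S.e (S.M - 1) = S.Pend := by
  obtain ⟨k0, hk0, hk0e⟩ := S.exists_e S.Pend_mem
  have h1 : S.e (S.M - 1) ≤ S.Pend := S.Kept_le (S.e_mem (by have := S.M_pos; omega))
  have h2 : S.e k0 ≤ S.e (S.M - 1) := S.e_le_e (by omega) (by have := S.M_pos; omega)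
  rw [hk0e] at h2
  omega

end BGTSetup
end consts

section Walk
variable {V : Type*} [MetricSpace V] [Fintype V] (S : BGTSetup V)
namespace BGTSetup
local notation "WL" => walkLen (fun x y : V => edist x y)

def isAnch (p : ℕ) : Prop := ∃ t, t < S.m ∧ S.anch t = p

noncomputable def tinyAt (p : ℕ) : Option V :=
  ((List.range S.m).find? (fun t => S.anch t == p)).bind (fun t => S.tinyL[t]?)

lemma tinyAt_eq_none {p : ℕ} (h : ¬ S.isAnch p) : S.tinyAt p = none := by
  unfold tinyAt
  have hnone : (List.range S.m).find? (fun t => S.anch t == p) = none := by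
    rw [List.find?_eq_none]
    intro t ht
    simp only [beq_iff_eq]
    intro hc
    exact h ⟨t, List.mem_range.mp ht, hc⟩
  rw [hnone]; rfl

lemma tinyAt_anch {t : ℕ} (h : t < S.m) :
    S.tinyAt (S.anch t) = some (S.tinyL.get ⟨t, h⟩) := by
  unfold tinyAt
  have hsome : ((List.range S.m).find? (fun t' => S.anch t' == S.anch t)).isSome := by
    rw [List.find?_isSome]
    exact ⟨t, List.mem_range.mpr h, by simp⟩
  obtain ⟨t', ht'⟩ := Option.isSome_iff_exists.mp hsome
  have h1 : S.anch t' = S.anch t := by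
    have := List.find?_some ht'
    simpa using this
  have h2 : t' = t := S.anch_injective h1
  rw [ht', h2]
  simp only [Option.bind_some]
  exact List.getElem?_eq_getElem h

lemma tinyAt_mem {p : ℕ} {x : V} (h : S.tinyAt p = some x) : x ∈ S.tinyL := by
  unfold tinyAt at h
  rcases hfind : (List.range S.m).find? (fun t => S.anch t == p) with _ | t
  · rw [hfind] at h; simp at h
  · rw [hfind] at h
    simp only [Option.bind_some] at h
    exact List.mem_of_getElem? h

lemma not_isAnch_Pend : ¬ S.isAnch S.Pend := by
  rintro ⟨t, ht, hanch⟩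
  have h1 : S.lev (S.anch t) < S.Lam := S.lev_anch_lt_Lam ht
  have h2 : S.Lam ≤ S.lev S.Pend := S.le_lev_tau S.Lam_ne_top
  rw [hanch] at h1
  exact absurd h2 (not_le.mpr h1)

noncomputable def aux (k : ℕ) : V :=
  (S.tinyAt (S.e k)).getD (S.f (S.e (if k + 1 < S.M then k + 1 else 0)))

/-- The periodic walk -/
noncomputable def Wp (i : ℕ) : V :=
  if (i % (2 * S.M)) % 2 = 0 then S.f (S.e ((i % (2 * S.M)) / 2))
  else S.aux ((i % (2 * S.M)) / 2)

lemma Wp_periodic (i : ℕ) : S.Wp (i + 2 * S.M) = S.Wp i := by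
  unfold Wp
  rw [Nat.add_mod_right]

lemma Wp_even {k : ℕ} (h : k < S.M) : S.Wp (2 * k) = S.f (S.e k) := by
  unfold Wp
  have h1 : 2 * k % (2 * S.M) = 2 * k := Nat.mod_eq_of_lt (by omega)
  rw [h1]
  have h2 : 2 * k % 2 = 0 := by omega
  rw [if_pos h2, show 2 * k / 2 = k by omega]

lemma Wp_odd {k : ℕ} (h : k < S.M) : S.Wp (2 * k + 1) = S.aux k := by
  unfold Wp
  have h1 : (2 * k + 1) % (2 * S.M) = 2 * k + 1 := Nat.mod_eq_of_lt (by omega)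
  rw [h1]
  have h2 : (2 * k + 1) % 2 = 1 := by omega
  rw [if_neg (by omega), show (2 * k + 1) / 2 = k by omega]

lemma Wp_zero : S.Wp 0 = S.u := by
  have h := S.Wp_even S.M_pos
  simpa [S.e_zero, S.f_P0] using h

lemma Wp_2M : S.Wp (2 * S.M) = S.u := by
  have := S.Wp_periodic 0
  simpa [S.Wp_zero] using this

/-- anchor-detour indicator cost -/
noncomputable def A (k : ℕ) : ℝ≥0∞ := if S.isAnch (S.e k) then 100 * S.q else 0

lemma step_pair {k : ℕ} (h : k + 1 < S.M) :
    WL S.Wp (2 * k) (2 * k + 2) ≤ WL S.f (S.e k) (S.e (k + 1)) + S.A k := by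
  have hkM : k < S.M := by omega
  have hW0 : S.Wp (2 * k) = S.f (S.e k) := S.Wp_even hkM
  have hW1 : S.Wp (2 * k + 1) = S.aux k := S.Wp_odd hkM
  have hW2 : S.Wp (2 * k + 2) = S.f (S.e (k + 1)) := by
    have : 2 * k + 2 = 2 * (k + 1) := by ring
    rw [this, S.Wp_even h]
  rw [walkLen_two, hW0, hW1, hW2]
  have hee : S.e k ≤ S.e (k + 1) := (S.e_lt_e (by omega) h).le
  by_cases han : S.isAnch (S.e k)
  · obtain ⟨t, ht, hteq⟩ := han
    have haux : S.aux k = S.tinyL.get ⟨t, ht⟩ := by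
      unfold aux
      rw [← hteq, S.tinyAt_anch ht]
      rfl
    set x := S.tinyL.get ⟨t, ht⟩ with hx
    have hfu : S.f (S.e k) = S.u := by rw [← hteq, S.f_anch]
    have hA : S.A k = 100 * S.q := if_pos ⟨t, ht, hteq⟩
    rw [haux, hfu, hA]
    calc edist S.u x + edist x (S.f (S.e (k+1)))
        ≤ edist S.u x + (edist x S.u + edist S.u (S.f (S.e (k+1)))) :=
          add_le_add_right (edist_triangle _ _ _) _
      _ = 2 * edist S.u x + edist S.u (S.f (S.e (k+1))) := by
          rw [edist_comm x S.u]; ring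
      _ ≤ 100 * S.q + edist (S.f (S.e k)) (S.f (S.e (k+1))) := by
          rw [hfu]
          exact add_le_add (S.hball x) le_rfl
      _ ≤ 100 * S.q + WL S.f (S.e k) (S.e (k+1)) :=
          add_le_add_right (edist_le_walkLen S.f hee) _
      _ = WL S.f (S.e k) (S.e (k+1)) + 100 * S.q := by ring
  · have haux : S.aux k = S.f (S.e (k + 1)) := by
      unfold aux
      rw [S.tinyAt_eq_none han, if_pos h]
      rfl
    have hA : S.A k = 0 := if_neg han
    rw [haux, hA, edist_self, add_zero, add_zero]
    exact edist_le_walkLen S.f hee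

lemma master {k k' : ℕ} (h : k ≤ k') (h2 : k' < S.M) :
    WL S.Wp (2 * k) (2 * k') ≤ WL S.f (S.e k) (S.e k') + ∑ i ∈ Finset.Ico k k', S.A i := by
  induction k' with
  | zero =>
    have : k = 0 := by omega
    subst this
    simp [walkLen_self]
  | succ n ih =>
    rcases Nat.lt_or_ge k (n + 1) with h' | h'
    · have hkn : k ≤ n := by omega
      have hnM : n < S.M := by omega
      have hsplit : WL S.Wp (2*k) (2*(n+1)) =
          WL S.Wp (2*k) (2*n) + WL S.Wp (2*n) (2*n+2) := by
        rw [show 2*(n+1) = 2*n + 2 by ring]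
        exact (walkLen_add _ _ (by omega) (by omega)).symm
      rw [hsplit]
      have hstep := S.step_pair (k := n) (by omega)
      have hih := ih hkn hnM
      calc WL S.Wp (2*k) (2*n) + WL S.Wp (2*n) (2*n+2)
          ≤ (WL S.f (S.e k) (S.e n) + ∑ i ∈ Finset.Ico k n, S.A i) +
            (WL S.f (S.e n) (S.e (n+1)) + S.A n) := add_le_add hih hstep
        _ = (WL S.f (S.e k) (S.e n) + WL S.f (S.e n) (S.e (n+1))) +
            (∑ i ∈ Finset.Ico k n, S.A i + S.A n) := by ring
        _ = WL S.f (S.e k) (S.e (n+1)) + ∑ i ∈ Finset.Ico k (n+1), S.A i := by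
          rw [walkLen_add _ _ (S.e_le_e hkn hnM) (S.e_lt_e (by omega) h2).le,
            Finset.sum_Ico_succ_top hkn]
    · have : k = n + 1 := by omega
      subst this
      simp [walkLen_self]

lemma sumA_eq (k k' : ℕ) : ∑ i ∈ Finset.Ico k k', S.A i =
    (((Finset.Ico k k').filter (fun i => S.isAnch (S.e i))).card : ℝ≥0∞) * (100 * S.q) := by
  unfold A
  rw [← Finset.sum_filter, Finset.sum_const, nsmul_eq_mul]

/-- choice of anchor index witnessing `isAnch` -/
noncomputable def Tof (i : ℕ) : ℕ :=
  if h : S.isAnch (S.e i) then h.choose else 0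

lemma Tof_spec {i : ℕ} (h : S.isAnch (S.e i)) :
    S.Tof i < S.m ∧ S.anch (S.Tof i) = S.e i := by
  unfold Tof
  rw [dif_pos h]
  exact h.choose_spec

lemma anch_mono_iff {s t : ℕ} : S.anch s ≤ S.anch t ↔ s ≤ t := by
  constructor
  · intro h
    by_contra hc
    push_neg at hc
    exact absurd h (not_le.mpr (S.anch_strictMono hc))
  · intro h
    rcases eq_or_lt_of_le h with rfl | h'
    · exact le_rfl
    · exact (S.anch_strictMono h').le

end BGTSetup
end Walk

section Cnt
variable {V : Type*} [MetricSpace V] [Fintype V] (S : BGTSetup V)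
namespace BGTSetup
local notation "WL" => walkLen (fun x y : V => edist x y)

lemma cancel100 (Y : ℝ≥0∞) : 100 * Y / 100 = Y := by
  rw [mul_comm, mul_div_assoc, ENNReal.div_self (by norm_num) (by norm_num), mul_one]

lemma P0_lt_anch (t : ℕ) : S.P0 < S.anch t := S.P0_lt_visAt _ _

lemma e_inj_lt {i i' : ℕ} (hi : i < S.M) (hi' : i' < S.M) (hne : i ≠ i') :
    S.e i ≠ S.e i' := by
  rcases Nat.lt_or_ge i i' with h | h
  · exact (S.e_lt_e h hi').ne
  · have h' : i' < i := by omega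
    exact (S.e_lt_e h' hi).ne'

lemma cnt_le {k k' : ℕ} (hkk : k ≤ k') (h2 : k' < S.M) :
    (((Finset.Ico k k').filter (fun i => S.isAnch (S.e i))).card : ℝ≥0∞) * (100 * S.q)
      ≤ WL S.f (S.e k) (S.e k') / 100 + 102 * S.q := by
  set F := (Finset.Ico k k').filter (fun i => S.isAnch (S.e i)) with hF
  rcases F.eq_empty_or_nonempty with hFe | hFne
  · rw [hFe]; simp
  set i1 := F.min' hFne with hi1
  set i2 := F.max' hFne with hi2
  have hi1F : i1 ∈ F := F.min'_mem hFne
  have hi2F : i2 ∈ F := F.max'_mem hFne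
  have hmemF : ∀ i ∈ F, (k ≤ i ∧ i < k') ∧ S.isAnch (S.e i) := by
    intro i hi
    have := Finset.mem_filter.mp hi
    exact ⟨Finset.mem_Ico.mp this.1, this.2⟩
  have hiM : ∀ i ∈ F, i < S.M := fun i hi => lt_trans (hmemF i hi).1.2 h2
  set t1 := S.Tof i1 with ht1
  set t2 := S.Tof i2 with ht2
  have hs1 := S.Tof_spec (hmemF i1 hi1F).2
  have hs2 := S.Tof_spec (hmemF i2 hi2F).2
  -- injectivity
  have hTinj : Set.InjOn S.Tof F := by
    intro i hi i' hi' heq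
    by_contra hne
    have h1 := (S.Tof_spec (hmemF i (by simpa using hi)).2).2
    have h2' := (S.Tof_spec (hmemF i' (by simpa using hi')).2).2
    rw [heq] at h1
    exact S.e_inj_lt (hiM i (by simpa using hi)) (hiM i' (by simpa using hi')) hne
      (h1 ▸ h2' ▸ rfl)
  -- range
  have hTrange : ∀ i ∈ F, S.Tof i ∈ Finset.Icc t1 t2 := by
    intro i hi
    have hsi := S.Tof_spec (hmemF i hi).2
    rw [Finset.mem_Icc]
    constructor
    · rw [← S.anch_mono_iff]
      rw [hs1.2, hsi.2]
      exact S.e_le_e (F.min'_le i hi) (hiM i hi)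
    · rw [← S.anch_mono_iff]
      rw [hs2.2, hsi.2]
      exact S.e_le_e (F.le_max' i hi) (hiM i2 hi2F)
  have ht12 : t1 ≤ t2 := by
    rw [← S.anch_mono_iff, hs1.2, hs2.2]
    exact S.e_le_e (F.min'_le i2 hi2F) (hiM i2 hi2F)
  obtain ⟨D, hD⟩ : ∃ D, t2 = t1 + D := ⟨t2 - t1, by omega⟩
  have hcard : F.card ≤ D + 1 := by
    have h := Finset.card_le_card_of_injOn S.Tof hTrange hTinj
    rwa [Nat.card_Icc, show t2 + 1 - t1 = D + 1 by omega] at h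
  -- length lower bound
  have hanch12 : S.anch t1 ≤ S.anch t2 := S.anch_mono_iff.mpr ht12
  have hwl : WL S.f (S.anch t1) (S.anch t2) ≤ WL S.f (S.e k) (S.e k') := by
    apply walkLen_le_walkLen
    · rw [hs1.2]; exact S.e_le_e (hmemF i1 hi1F).1.1 (hiM i1 hi1F)
    · exact hanch12
    · rw [hs2.2]; exact S.e_le_e (hmemF i2 hi2F).1.2.le h2
  have hlevadd : S.lev (S.anch t1) + WL S.f (S.anch t1) (S.anch t2) = S.lev (S.anch t2) :=
    S.lev_add (S.P0_lt_anch t1).le hanch12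
  have claim1 : ((10000 * D : ℕ) : ℝ≥0∞) * S.q ≤
      WL S.f (S.e k) (S.e k') + 200 * S.q := by
    have hsum : ((10000 * (t1 + 1) + 200 : ℕ) : ℝ≥0∞) * S.q + ((10000 * D : ℕ) : ℝ≥0∞) * S.q =
        ((10000 * (t2 + 1) : ℕ) : ℝ≥0∞) * S.q + 200 * S.q := by
      rw [hD]
      push_cast
      ring
    have hchain : ((10000 * (t2 + 1) : ℕ) : ℝ≥0∞) * S.q + 200 * S.q ≤
        ((10000 * (t1 + 1) + 200 : ℕ) : ℝ≥0∞) * S.q + (WL S.f (S.e k) (S.e k') + 200 * S.q) := by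
      calc ((10000 * (t2 + 1) : ℕ) : ℝ≥0∞) * S.q + 200 * S.q
          ≤ S.lev (S.anch t2) + 200 * S.q := add_le_add_left (S.lev_anch_ge t2) _
        _ = S.lev (S.anch t1) + WL S.f (S.anch t1) (S.anch t2) + 200 * S.q := by
            rw [hlevadd]
        _ ≤ ((10000 * (t1 + 1) + 200 : ℕ) : ℝ≥0∞) * S.q + WL S.f (S.e k) (S.e k') + 200 * S.q := by
            exact add_le_add_left (add_le_add (S.lev_anch_le t1) hwl) _
        _ = ((10000 * (t1 + 1) + 200 : ℕ) : ℝ≥0∞) * S.q + (WL S.f (S.e k) (S.e k') + 200 * S.q) := by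
            ring
    have hfin := le_trans (le_of_eq hsum) hchain
    exact (ENNReal.add_le_add_iff_left (S.qmul_ne_top _)).mp hfin
  -- conclude
  have hDle : ((D : ℕ) : ℝ≥0∞) * (100 * S.q) ≤
      WL S.f (S.e k) (S.e k') / 100 + 2 * S.q := by
    have heq : ((D : ℕ) : ℝ≥0∞) * (100 * S.q) =
        (((10000 * D : ℕ) : ℝ≥0∞) * S.q) / 100 := by
      rw [show ((10000 * D : ℕ) : ℝ≥0∞) * S.q =
        100 * (((D : ℕ) : ℝ≥0∞) * (100 * S.q)) by push_cast; ring, cancel100]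
    rw [heq]
    calc (((10000 * D : ℕ) : ℝ≥0∞) * S.q) / 100
        ≤ (WL S.f (S.e k) (S.e k') + 200 * S.q) / 100 := ENNReal.div_le_div_right claim1 _
      _ = WL S.f (S.e k) (S.e k') / 100 + (200 * S.q) / 100 := ENNReal.add_div
      _ = WL S.f (S.e k) (S.e k') / 100 + 2 * S.q := by
          rw [show (200 : ℝ≥0∞) * S.q = 100 * (2 * S.q) by ring, cancel100]
  calc (F.card : ℝ≥0∞) * (100 * S.q)
      ≤ ((D + 1 : ℕ) : ℝ≥0∞) * (100 * S.q) := by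
        exact mul_le_mul_left (by exact_mod_cast hcard) _
    _ = ((D : ℕ) : ℝ≥0∞) * (100 * S.q) + 100 * S.q := by push_cast; ring
    _ ≤ (WL S.f (S.e k) (S.e k') / 100 + 2 * S.q) + 100 * S.q := add_le_add_left hDle _
    _ = WL S.f (S.e k) (S.e k') / 100 + 102 * S.q := by ring

lemma cnt0_le {k' : ℕ} (h2 : k' < S.M) :
    (((Finset.Ico 0 k').filter (fun i => S.isAnch (S.e i))).card : ℝ≥0∞) * (100 * S.q)
      ≤ S.lev (S.e k') / 100 := by
  set F := (Finset.Ico 0 k').filter (fun i => S.isAnch (S.e i)) with hF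
  rcases F.eq_empty_or_nonempty with hFe | hFne
  · rw [hFe]; simp
  have hmemF : ∀ i ∈ F, i < k' ∧ S.isAnch (S.e i) := by
    intro i hi
    have := Finset.mem_filter.mp hi
    exact ⟨(Finset.mem_Ico.mp this.1).2, this.2⟩
  have hiM : ∀ i ∈ F, i < S.M := fun i hi => lt_trans (hmemF i hi).1 h2
  set Tset := (Finset.range S.m).filter
    (fun t => ((10000 * (t + 1) : ℕ) : ℝ≥0∞) * S.q ≤ S.lev (S.e k')) with hTset
  have hTmem : ∀ i ∈ F, S.Tof i ∈ Tset := by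
    intro i hi
    have hsi := S.Tof_spec (hmemF i hi).2
    rw [hTset, Finset.mem_filter, Finset.mem_range]
    refine ⟨hsi.1, ?_⟩
    calc ((10000 * (S.Tof i + 1) : ℕ) : ℝ≥0∞) * S.q ≤ S.lev (S.anch (S.Tof i)) :=
          S.lev_anch_ge _
      _ = S.lev (S.e i) := by rw [hsi.2]
      _ ≤ S.lev (S.e k') := S.lev_mono (S.e_le_e (hmemF i hi).1.le h2)
  have hTinj : Set.InjOn S.Tof F := by
    intro i hi i' hi' heq
    by_contra hne
    have h1 := (S.Tof_spec (hmemF i (by simpa using hi)).2).2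
    have h2' := (S.Tof_spec (hmemF i' (by simpa using hi')).2).2
    rw [heq] at h1
    exact S.e_inj_lt (hiM i (by simpa using hi)) (hiM i' (by simpa using hi')) hne
      (h1 ▸ h2' ▸ rfl)
  have hcard : F.card ≤ Tset.card := Finset.card_le_card_of_injOn S.Tof hTmem hTinj
  rcases Tset.eq_empty_or_nonempty with hTe | hTne
  · rw [hTe] at hcard
    simp only [Finset.card_empty, Nat.le_zero] at hcard
    rw [hcard]
    simp
  set th := Tset.max' hTne with hth
  have hthT : th ∈ Tset := Tset.max'_mem hTne
  have hsub : Tset ⊆ Finset.range (th + 1) := by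
    intro t ht
    rw [Finset.mem_range]
    exact Nat.lt_succ_of_le (Tset.le_max' t ht)
  have hcard2 : F.card ≤ th + 1 := le_trans hcard
    (le_trans (Finset.card_le_card hsub) (by rw [Finset.card_range]))
  have hthle : ((10000 * (th + 1) : ℕ) : ℝ≥0∞) * S.q ≤ S.lev (S.e k') :=
    (Finset.mem_filter.mp hthT).2
  calc (F.card : ℝ≥0∞) * (100 * S.q)
      ≤ ((th + 1 : ℕ) : ℝ≥0∞) * (100 * S.q) := mul_le_mul_left (by exact_mod_cast hcard2) _
    _ = (((10000 * (th + 1) : ℕ) : ℝ≥0∞) * S.q) / 100 := by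
        rw [show ((10000 * (th + 1) : ℕ) : ℝ≥0∞) * S.q =
          100 * (((th + 1 : ℕ) : ℝ≥0∞) * (100 * S.q)) by push_cast; ring, cancel100]
    _ ≤ S.lev (S.e k') / 100 := ENNReal.div_le_div_right hthle _

lemma cnt_le_m (k k' : ℕ) (h2 : k' < S.M) :
    (((Finset.Ico k k').filter (fun i => S.isAnch (S.e i))).card : ℝ≥0∞) * (100 * S.q)
      ≤ ((S.m : ℕ) : ℝ≥0∞) * (100 * S.q) := by
  set F := (Finset.Ico k k').filter (fun i => S.isAnch (S.e i)) with hF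
  have hmemF : ∀ i ∈ F, i < k' ∧ S.isAnch (S.e i) := by
    intro i hi
    have := Finset.mem_filter.mp hi
    exact ⟨(Finset.mem_Ico.mp this.1).2, this.2⟩
  have hiM : ∀ i ∈ F, i < S.M := fun i hi => lt_trans (hmemF i hi).1 h2
  have hTmem : ∀ i ∈ F, S.Tof i ∈ Finset.range S.m := by
    intro i hi
    exact Finset.mem_range.mpr (S.Tof_spec (hmemF i hi).2).1
  have hTinj : Set.InjOn S.Tof F := by
    intro i hi i' hi' heq
    by_contra hne
    have h1 := (S.Tof_spec (hmemF i (by simpa using hi)).2).2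
    have h2' := (S.Tof_spec (hmemF i' (by simpa using hi')).2).2
    rw [heq] at h1
    exact S.e_inj_lt (hiM i (by simpa using hi)) (hiM i' (by simpa using hi')) hne
      (h1 ▸ h2' ▸ rfl)
  have hcard : F.card ≤ S.m := by
    have := Finset.card_le_card_of_injOn S.Tof hTmem hTinj
    rwa [Finset.card_range] at this
  exact mul_le_mul_left (by exact_mod_cast hcard) _

lemma wrap_le : WL S.Wp (2 * (S.M - 1)) (2 * S.M) ≤ 50 * S.q := by
  have hM := S.M_pos
  have h2M : 2 * S.M = 2 * (S.M - 1) + 2 := by omega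
  rw [h2M, walkLen_two]
  have hW0 : S.Wp (2 * (S.M - 1)) = S.f S.Pend := by
    rw [S.Wp_even (by omega), S.e_last]
  have hW1 : S.Wp (2 * (S.M - 1) + 1) = S.aux (S.M - 1) := S.Wp_odd (by omega)
  have haux : S.aux (S.M - 1) = S.u := by
    unfold aux
    rw [S.e_last, S.tinyAt_eq_none S.not_isAnch_Pend]
    rw [if_neg (by omega)]
    simp [S.e_zero, S.f_P0]
  have hW2 : S.Wp (2 * (S.M - 1) + 2) = S.u := by
    rw [← h2M, S.Wp_2M]
  rw [hW0, hW1, haux, hW2, edist_self, add_zero, edist_comm]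
  exact S.edist_u_le _

lemma PW_le : WL S.Wp 0 (2 * S.M) ≤
    S.Lam + 100 * S.q + ((S.m : ℕ) : ℝ≥0∞) * (100 * S.q) + 50 * S.q := by
  have hM := S.M_pos
  have hsplit : WL S.Wp 0 (2 * S.M) =
      WL S.Wp (2 * 0) (2 * (S.M - 1)) + WL S.Wp (2 * (S.M - 1)) (2 * S.M) := by
    rw [show 2 * 0 = 0 by ring]
    exact (walkLen_add _ _ (by omega) (by omega)).symm
  rw [hsplit]
  have hmaster := S.master (k := 0) (k' := S.M - 1) (by omega) (by omega)
  have hsum := S.sumA_eq 0 (S.M - 1)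
  calc WL S.Wp (2*0) (2*(S.M-1)) + WL S.Wp (2*(S.M-1)) (2*S.M)
      ≤ (WL S.f (S.e 0) (S.e (S.M-1)) + ∑ i ∈ Finset.Ico 0 (S.M-1), S.A i) + 50 * S.q :=
        add_le_add hmaster S.wrap_le
    _ ≤ (S.Lam + 100 * S.q + ((S.m : ℕ) : ℝ≥0∞) * (100 * S.q)) + 50 * S.q := by
        refine add_le_add_left (add_le_add ?_ ?_) _
        · rw [S.e_zero, S.e_last]
          exact S.lev_Pend_le
        · rw [hsum]
          exact S.cnt_le_m 0 (S.M - 1) (by omega)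
    _ = S.Lam + 100 * S.q + ((S.m : ℕ) : ℝ≥0∞) * (100 * S.q) + 50 * S.q := by ring

end BGTSetup
end Cnt

section Lat
variable {V : Type*} [MetricSpace V] [Fintype V] (S : BGTSetup V)
namespace BGTSetup
local notation "WL" => walkLen (fun x y : V => edist x y)

noncomputable def Pbound : ℝ≥0∞ :=
  S.Lam + 100 * S.q + ((S.m : ℕ) : ℝ≥0∞) * (100 * S.q) + 50 * S.q

noncomputable def BH (v : V) : ℝ≥0∞ :=
  (S.g v + 225 * S.q) + (S.g v + 225 * S.q) / 100 + 102 * S.q + 50 * S.q + S.g v + S.g v / 100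

lemma latency_le_Pbound (v : V) : latency (fun x y => edist x y) S.Wp v ≤ S.Pbound := by
  refine latency_le_of_periodic_returns _ _ (by have := S.M_pos; omega) S.Wp_periodic ?_
  intro j hj hWj
  refine ⟨j + 2 * S.M, by have := S.M_pos; omega, ?_, ?_⟩
  · rw [Wp_periodic]; exact hWj
  · rw [walkLen_rotate _ _ S.Wp_periodic j]
    exact S.PW_le

lemma exists_tick (x : ℝ≥0∞) (hx : x ≠ ⊤) : ∃ j : ℕ, x < S.tickLevel j := by
  have h25 : (25 : ℝ≥0∞) * S.q ≠ 0 := by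
    refine mul_ne_zero (by norm_num) S.hq0
  have hdiv : x / (25 * S.q) ≠ ⊤ := by
    rw [Ne, ENNReal.div_eq_top]
    push_neg
    exact ⟨fun _ => h25, fun h => absurd h hx⟩
  obtain ⟨j, hj⟩ := ENNReal.exists_nat_gt hdiv
  refine ⟨j, ?_⟩
  have h1 := (ENNReal.div_lt_iff (Or.inl h25) (Or.inr hx)).mp hj
  calc x < (j : ℝ≥0∞) * (25 * S.q) := h1
    _ = S.tickLevel j := by unfold tickLevel; push_cast; ring

lemma latency_le_BH {v : V} (hv : S.Heavy v) :
    latency (fun x y => edist x y) S.Wp v ≤ S.BH v := by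
  have hM := S.M_pos
  refine latency_le_of_periodic_returns _ _ (by omega) S.Wp_periodic ?_
  intro j hj hWj
  rcases Nat.even_or_odd j with ⟨k, hk⟩ | ⟨k, hk⟩
  · -- even occurrence
    have hkM : k < S.M := by omega
    have hjk : j = 2 * k := by omega
    have hfv : S.f (S.e k) = v := by
      rw [← S.Wp_even hkM, ← hjk]; exact hWj
    have htK : S.e k ∈ S.Kept := S.e_mem hkM
    have hP0t : S.P0 ≤ S.e k := S.Kept_ge htK
    have hex : ∃ jj : ℕ, S.lev (S.e k) < S.tickLevel jj :=
      S.exists_tick _ (S.lev_ne_top _)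
    set j' := Nat.find hex with hj'def
    have hspec : S.lev (S.e k) < S.tickLevel j' := Nat.find_spec hex
    have hj'pos : 0 < j' := by
      rcases Nat.eq_zero_or_pos j' with h0 | h0
      · exfalso
        have h1 := hspec
        rw [h0] at h1
        have h2 : S.tickLevel 0 = 0 := by unfold tickLevel; simp
        rw [h2] at h1
        simp at h1
      · exact h0
    obtain ⟨jp, hjp⟩ : ∃ jp, j' = jp + 1 := ⟨j' - 1, by omega⟩
    have hlow : S.tickLevel jp ≤ S.lev (S.e k) := by
      have := Nat.find_min hex (m := jp) (by omega)
      exact not_lt.mp this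
    have httau : S.e k ≤ S.tau (S.tickLevel j') :=
      S.le_tau_of_lev_lt (S.tickLevel_ne_top j') hspec
    have htb : S.e k < S.bpos v j' := lt_of_le_of_lt httau (S.tau_lt_visAt _ _)
    have hWLtb : WL S.f (S.e k) (S.bpos v j') ≤ S.g v + 125 * S.q := by
      have hadd := S.lev_add hP0t htb.le
      have hfin : S.lev (S.e k) + WL S.f (S.e k) (S.bpos v j') ≤
          S.lev (S.e k) + (S.g v + 125 * S.q) := by
        rw [hadd]
        calc S.lev (S.bpos v j') ≤ S.tickLevel j' + 100 * S.q + S.g v :=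
              S.lev_visAt_le v (S.tickLevel_ne_top j')
          _ = S.tickLevel jp + 25 * S.q + 100 * S.q + S.g v := by
              rw [hjp]; unfold tickLevel; push_cast; ring
          _ ≤ S.lev (S.e k) + 25 * S.q + 100 * S.q + S.g v :=
              add_le_add_left (add_le_add_left (add_le_add_left hlow _) _) _
          _ = S.lev (S.e k) + (S.g v + 125 * S.q) := by ring
      exact (ENNReal.add_le_add_iff_left (S.lev_ne_top _)).mp hfin
    by_cases hTic : S.TicksOK v j'
    · -- normal return via the tick visit
      obtain ⟨k', hk'M, hek'⟩ := S.exists_e (S.bpos_mem hTic)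
      have hkk' : k < k' := by
        by_contra hc
        push_neg at hc
        have h1 := S.e_le_e hc hkM
        rw [hek'] at h1
        exact absurd h1 (not_le.mpr htb)
      refine ⟨2 * k', by omega, ?_, ?_⟩
      · rw [S.Wp_even hk'M, hek', S.f_bpos]
      · rw [hjk]
        have hWL' : WL S.f (S.e k) (S.e k') ≤ S.g v + 125 * S.q := by
          rw [hek']; exact hWLtb
        calc WL S.Wp (2*k) (2*k')
            ≤ WL S.f (S.e k) (S.e k') + ∑ i ∈ Finset.Ico k k', S.A i :=
              S.master hkk'.le hk'M
          _ ≤ (S.g v + 125 * S.q) + ((S.g v + 125 * S.q) / 100 + 102 * S.q) := by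
              refine add_le_add hWL' ?_
              rw [S.sumA_eq]
              refine le_trans (S.cnt_le hkk'.le hk'M) ?_
              exact add_le_add_left (ENNReal.div_le_div_right hWL' _) _
          _ ≤ (S.g v + 225 * S.q) + ((S.g v + 225 * S.q) / 100 + 102 * S.q) := by
              have h1 : S.g v + 125 * S.q ≤ S.g v + 225 * S.q :=
                add_le_add_right (mul_le_mul_left (by norm_num) _) _
              exact add_le_add h1 (add_le_add_left (ENNReal.div_le_div_right h1 _) _)
          _ ≤ ((S.g v + 225 * S.q) + ((S.g v + 225 * S.q) / 100 + 102 * S.q)) +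
              (50 * S.q + S.g v + S.g v / 100) := le_self_add
          _ = S.BH v := by unfold BH; ring
    · -- wrap-around return
      have hSeam : S.Lam ≤ ((25 * j' + 100 : ℕ) : ℝ≥0∞) * S.q + S.g v := not_lt.mp hTic
      have hlevt : S.Lam ≤ S.lev (S.e k) + (S.g v + 125 * S.q) := by
        calc S.Lam ≤ ((25 * j' + 100 : ℕ) : ℝ≥0∞) * S.q + S.g v := hSeam
          _ = S.tickLevel jp + 125 * S.q + S.g v := by
              rw [hjp]; unfold tickLevel; push_cast; ring
          _ ≤ S.lev (S.e k) + 125 * S.q + S.g v :=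
              add_le_add_left (add_le_add_left hlow _) _
          _ = S.lev (S.e k) + (S.g v + 125 * S.q) := by ring
      have hkM1 : k ≤ S.M - 1 := by omega
      have hl1 : WL S.f (S.e k) S.Pend ≤ S.g v + 225 * S.q := by
        have hadd := S.lev_add hP0t (S.Kept_le htK)
        have hfin : S.lev (S.e k) + WL S.f (S.e k) S.Pend ≤
            S.lev (S.e k) + (S.g v + 225 * S.q) := by
          rw [hadd]
          calc S.lev S.Pend ≤ S.Lam + 100 * S.q := S.lev_Pend_le
            _ ≤ (S.lev (S.e k) + (S.g v + 125 * S.q)) + 100 * S.q := add_le_add_left hlevt _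
            _ = S.lev (S.e k) + (S.g v + 225 * S.q) := by ring
        exact (ENNReal.add_le_add_iff_left (S.lev_ne_top _)).mp hfin
      have hpiece1 : WL S.Wp (2*k) (2*(S.M-1)) ≤
          (S.g v + 225 * S.q) + ((S.g v + 225 * S.q) / 100 + 102 * S.q) := by
        have hwl1 : WL S.f (S.e k) (S.e (S.M-1)) ≤ S.g v + 225 * S.q := by
          rw [S.e_last]; exact hl1
        calc WL S.Wp (2*k) (2*(S.M-1))
            ≤ WL S.f (S.e k) (S.e (S.M-1)) + ∑ i ∈ Finset.Ico k (S.M-1), S.A i :=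
              S.master hkM1 (by omega)
          _ ≤ (S.g v + 225 * S.q) + ((S.g v + 225 * S.q) / 100 + 102 * S.q) := by
              refine add_le_add hwl1 ?_
              rw [S.sumA_eq]
              refine le_trans (S.cnt_le hkM1 (by omega)) ?_
              exact add_le_add_left (ENNReal.div_le_div_right hwl1 _) _
      have hTic0 : S.TicksOK v 0 := hv
      obtain ⟨k0, hk0M, hek0⟩ := S.exists_e (S.bpos_mem hTic0)
      have hb0 : S.bpos v 0 = S.visAt v 0 := by
        unfold bpos tickLevel
        norm_num
      have hlevb0 : S.lev (S.e k0) ≤ S.g v := by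
        rw [hek0, hb0]; exact S.lev_visAt_zero v
      have hpiece3 : WL S.Wp 0 (2*k0) ≤ S.g v + S.g v / 100 := by
        have h00 : (0 : ℕ) = 2 * 0 := by ring
        calc WL S.Wp 0 (2*k0) = WL S.Wp (2*0) (2*k0) := by rw [← h00]
          _ ≤ WL S.f (S.e 0) (S.e k0) + ∑ i ∈ Finset.Ico 0 k0, S.A i :=
              S.master (by omega) hk0M
          _ ≤ S.g v + S.g v / 100 := by
              refine add_le_add ?_ ?_
              · rw [S.e_zero]
                exact hlevb0
              · rw [S.sumA_eq]
                exact le_trans (S.cnt0_le hk0M) (ENNReal.div_le_div_right hlevb0 _)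
      refine ⟨2 * S.M + 2 * k0, by omega, ?_, ?_⟩
      · rw [show 2 * S.M + 2 * k0 = 2 * k0 + 2 * S.M by ring, S.Wp_periodic,
          S.Wp_even hk0M, hek0, S.f_bpos]
      · have e1 : WL S.Wp (2*k) (2*(S.M-1)) + WL S.Wp (2*(S.M-1)) (2*S.M) =
            WL S.Wp (2*k) (2*S.M) := walkLen_add _ _ (by omega) (by omega)
        have e2 : WL S.Wp (2*k) (2*S.M) + WL S.Wp (2*S.M) (2*S.M + 2*k0) =
            WL S.Wp (2*k) (2*S.M + 2*k0) := walkLen_add _ _ (by omega) (by omega)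
        have hshift : WL S.Wp (2*S.M) (2*S.M + 2*k0) = WL S.Wp 0 (2*k0) := by
          have h3 := walkLen_shift_per (fun x y : V => edist x y) S.Wp S.Wp_periodic 0 (2*k0)
          rw [show (0:ℕ) + 2*S.M = 2*S.M by omega, show 2*k0 + 2*S.M = 2*S.M + 2*k0 by omega] at h3
          exact h3
        rw [hjk, ← e2, ← e1, hshift]
        calc (WL S.Wp (2*k) (2*(S.M-1)) + WL S.Wp (2*(S.M-1)) (2*S.M)) + WL S.Wp 0 (2*k0)
            ≤ (((S.g v + 225 * S.q) + ((S.g v + 225 * S.q) / 100 + 102 * S.q)) + 50 * S.q) +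
              (S.g v + S.g v / 100) := add_le_add (add_le_add hpiece1 S.wrap_le) hpiece3
          _ = S.BH v := by unfold BH; ring
  · -- odd occurrence
    have hkM : k < S.M := by omega
    have hjk : j = 2 * k + 1 := by omega
    have hWj' : S.aux k = v := by
      rw [← S.Wp_odd hkM, ← hjk]; exact hWj
    rcases htin : S.tinyAt (S.e k) with _ | x
    · -- aux is a copy of the next vertex
      have haux : S.aux k = S.f (S.e (if k + 1 < S.M then k + 1 else 0)) := by
        unfold aux; rw [htin]; rfl
      have hnext : S.Wp (j + 1) = v := by
        have h2k2 : j + 1 = 2 * (k + 1) := by omega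
        by_cases hk1 : k + 1 < S.M
        · rw [h2k2, S.Wp_even hk1, ← hWj', haux, if_pos hk1]
        · have hkM1 : 2 * (k + 1) = 2 * S.M := by omega
          rw [h2k2, hkM1, S.Wp_2M, ← hWj', haux, if_neg hk1, S.e_zero, S.f_P0]
      refine ⟨j + 1, by omega, hnext, ?_⟩
      rw [walkLen_one, hWj, hnext, edist_self]
      exact zero_le
    · -- aux is a tiny vertex: contradicts heaviness
      exfalso
      have hxv : x = v := by
        rw [← hWj']
        unfold aux
        rw [htin]
        rfl
      have hxt : x ∈ S.tinyL := S.tinyAt_mem htin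
      have hnh : ¬ S.Heavy x := (S.mem_tinyL_iff).mp hxt
      rw [hxv] at hnh
      exact hnh hv

end BGTSetup
end Lat

section Cost
variable {V : Type*} [MetricSpace V] [Fintype V] [Nonempty V] (S : BGTSetup V)
namespace BGTSetup

lemma phi_le_one_mul (v : V) (x : ℝ≥0∞) : S.φ v * x ≤ x := by
  calc S.φ v * x ≤ 1 * x := mul_le_mul_left (S.hphi1 v) _
    _ = x := one_mul x

lemma div100_le {X Y : ℝ≥0∞} (h : X ≤ 100 * Y) : X / 100 ≤ Y := by
  calc X / 100 ≤ (100 * Y) / 100 := ENNReal.div_le_div_right h _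
    _ = Y := cancel100 Y

lemma phi_mul_BH_le (v : V) : S.φ v * S.BH v ≤ 582 * S.q := by
  have hg : S.φ v * S.g v ≤ 100 * S.q := S.hphig v
  have h1 : S.φ v * (S.g v + 225 * S.q) ≤ 325 * S.q := by
    rw [mul_add]
    calc S.φ v * S.g v + S.φ v * (225 * S.q) ≤ 100 * S.q + 225 * S.q :=
        add_le_add hg (S.phi_le_one_mul v _)
      _ = 325 * S.q := by ring
  have h2 : S.φ v * ((S.g v + 225 * S.q) / 100) ≤ 4 * S.q := by
    rw [← mul_div_assoc]
    refine div100_le ?_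
    calc S.φ v * (S.g v + 225 * S.q) ≤ 325 * S.q := h1
      _ ≤ 100 * (4 * S.q) := by
          rw [show (100 : ℝ≥0∞) * (4 * S.q) = 400 * S.q by ring]
          exact mul_le_mul_left (by norm_num) _
  have h3 : S.φ v * (S.g v / 100) ≤ S.q := by
    rw [← mul_div_assoc]
    refine div100_le ?_
    calc S.φ v * S.g v ≤ 100 * S.q := hg
      _ = 100 * (1 * S.q) := by ring
      _ ≤ 100 * S.q := by rw [one_mul]
  have hexp : S.φ v * S.BH v =
      S.φ v * (S.g v + 225 * S.q) + S.φ v * ((S.g v + 225 * S.q) / 100) +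
      S.φ v * (102 * S.q) + S.φ v * (50 * S.q) + S.φ v * S.g v +
      S.φ v * (S.g v / 100) := by
    unfold BH; ring
  rw [hexp]
  calc S.φ v * (S.g v + 225 * S.q) + S.φ v * ((S.g v + 225 * S.q) / 100) +
      S.φ v * (102 * S.q) + S.φ v * (50 * S.q) + S.φ v * S.g v + S.φ v * (S.g v / 100)
      ≤ 325 * S.q + 4 * S.q + 102 * S.q + 50 * S.q + 100 * S.q + S.q := by
        refine add_le_add (add_le_add (add_le_add (add_le_add (add_le_add h1 h2)
          (S.phi_le_one_mul v _)) (S.phi_le_one_mul v _)) hg) h3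
    _ = 582 * S.q := by ring

lemma Lam_div100 : S.Lam / 100 = ((100 * (Fintype.card V + 2) : ℕ) : ℝ≥0∞) * S.q := by
  unfold Lam
  rw [show ((10000 * (Fintype.card V + 2) : ℕ) : ℝ≥0∞) * S.q =
    100 * (((100 * (Fintype.card V + 2) : ℕ) : ℝ≥0∞) * S.q) by push_cast; ring]
  exact cancel100 _

lemma phi_mul_Pbound_le {v : V} (hv : ¬ S.Heavy v) : S.φ v * S.Pbound ≤ 582 * S.q := by
  have hg : S.φ v * S.g v ≤ 100 * S.q := S.hphig v
  have hLam_le : S.Lam ≤ 100 * S.q + S.g v := by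
    have h1 : ¬ (((25 * 0 + 100 : ℕ) : ℝ≥0∞) * S.q + S.g v < S.Lam) := hv
    have h2 := not_lt.mp h1
    calc S.Lam ≤ ((25 * 0 + 100 : ℕ) : ℝ≥0∞) * S.q + S.g v := h2
      _ = 100 * S.q + S.g v := by norm_num
  have hphiLam : S.φ v * S.Lam ≤ 200 * S.q := by
    calc S.φ v * S.Lam ≤ S.φ v * (100 * S.q + S.g v) := mul_le_mul_right hLam_le _
      _ = S.φ v * (100 * S.q) + S.φ v * S.g v := mul_add _ _ _
      _ ≤ 100 * S.q + 100 * S.q := add_le_add (S.phi_le_one_mul v _) hg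
      _ = 200 * S.q := by ring
  have hm : ((S.m : ℕ) : ℝ≥0∞) * (100 * S.q) ≤ S.Lam / 100 := by
    rw [S.Lam_div100]
    calc ((S.m : ℕ) : ℝ≥0∞) * (100 * S.q) = ((100 * S.m : ℕ) : ℝ≥0∞) * S.q := by
          push_cast; ring
      _ ≤ ((100 * (Fintype.card V + 2) : ℕ) : ℝ≥0∞) * S.q :=
          S.qmul_le_qmul (by have := S.m_le_card; omega)
  have hphim : S.φ v * (((S.m : ℕ) : ℝ≥0∞) * (100 * S.q)) ≤ 2 * S.q := by
    calc S.φ v * (((S.m : ℕ) : ℝ≥0∞) * (100 * S.q)) ≤ S.φ v * (S.Lam / 100) :=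
          mul_le_mul_right hm _
      _ = (S.φ v * S.Lam) / 100 := by rw [mul_div_assoc]
      _ ≤ 2 * S.q := by
          refine div100_le ?_
          calc S.φ v * S.Lam ≤ 200 * S.q := hphiLam
            _ = 100 * (2 * S.q) := by ring
  have hexp : S.φ v * S.Pbound = S.φ v * S.Lam + S.φ v * (100 * S.q) +
      S.φ v * (((S.m : ℕ) : ℝ≥0∞) * (100 * S.q)) + S.φ v * (50 * S.q) := by
    unfold Pbound; ring
  rw [hexp]
  calc S.φ v * S.Lam + S.φ v * (100 * S.q) +
      S.φ v * (((S.m : ℕ) : ℝ≥0∞) * (100 * S.q)) + S.φ v * (50 * S.q)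
      ≤ 200 * S.q + 100 * S.q + 2 * S.q + 50 * S.q := by
        refine add_le_add (add_le_add (add_le_add hphiLam (S.phi_le_one_mul v _)) hphim)
          (S.phi_le_one_mul v _)
    _ = 352 * S.q := by ring
    _ ≤ 582 * S.q := mul_le_mul_left (by norm_num) _

lemma walkCost_le : walkCost (fun x y => edist x y) S.φ S.Wp ≤ 582 * S.q := by
  refine iSup_le fun v => ?_
  by_cases hv : S.Heavy v
  · exact le_trans (mul_le_mul_right (S.latency_le_BH hv) _) (S.phi_mul_BH_le v)
  · exact le_trans (mul_le_mul_right (S.latency_le_Pbound v) _) (S.phi_mul_Pbound_le hv)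

lemma Wp_VIO : VisitsInfOften S.Wp := by
  intro v N
  have hocc : ∃ i0, S.Wp i0 = v := by
    by_cases hv : S.Heavy v
    · obtain ⟨k0, hk0M, hek0⟩ := S.exists_e (S.bpos_mem (hv : S.TicksOK v 0))
      exact ⟨2 * k0, by rw [S.Wp_even hk0M, hek0, S.f_bpos]⟩
    · have hvt : v ∈ S.tinyL := S.mem_tinyL_iff.mpr hv
      obtain ⟨⟨t, ht⟩, hget⟩ := List.mem_iff_get.mp hvt
      have htm : t < S.m := ht
      obtain ⟨ka, hkaM, heka⟩ := S.exists_e (S.anch_mem htm)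
      refine ⟨2 * ka + 1, ?_⟩
      rw [S.Wp_odd hkaM]
      unfold aux
      rw [heka, S.tinyAt_anch htm]
      simp only [Option.getD_some]
      exact hget
  obtain ⟨i0, hi0⟩ := hocc
  have hN : N ≤ i0 + (2 * S.M) * N := by
    have h1 : N ≤ 2 * S.M * N := Nat.le_mul_of_pos_left N (by have := S.M_pos; omega)
    omega
  refine ⟨i0 + (2 * S.M) * N, hN, ?_⟩
  rw [per_mult S.Wp S.Wp_periodic i0 N]
  exact hi0

lemma p_bound : 2 * S.M ≤ 2500 * Fintype.card V ^ 2 := by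
  have h1 := S.card_Kept
  have h2 : 1 ≤ Fintype.card V := Fintype.card_pos
  have h3 : S.M ≤ 2 + Fintype.card V + Fintype.card V * (400 * (Fintype.card V + 2)) := h1
  nlinarith [h3, h2, sq_nonneg (Fintype.card V)]

end BGTSetup
end Cost

/-- For any metric graph with n vertices there is a closed walk of size O(n²) whose
infinite expansion has cost at most 6·OPT. -/
theorem exists_quadratic_constant_factor_walk :
    ∃ C : ℕ, ∀ (V : Type) [MetricSpace V] [Fintype V] [Nonempty V]
      (φ : V → ℝ≥0∞), (∀ v, 0 < φ v ∧ φ v ≤ 1) → (∃ v, φ v = 1) →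
      ∃ (W : ℕ → V) (p : ℕ), 0 < p ∧ p ≤ C * Fintype.card V ^ 2 ∧
        (∀ i, W (i + p) = W i) ∧ VisitsInfOften W ∧
        walkCost (fun x y => edist x y) φ W ≤
          6 * OPT (fun x y => edist x y) φ := by
  refine ⟨2500, ?_⟩
  intro V _ _ _ φ hφ hone
  obtain ⟨u, hu⟩ := hone
  have hcard1 : 1 ≤ Fintype.card V := Fintype.card_pos
  by_cases hsub : ∀ x : V, x = u
  · -- single-vertex case: constant walk
    have hcost0 : walkCost (fun x y => edist x y) φ (fun _ => u) = 0 := by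
      rw [walkCost]
      have hlat : ∀ v : V, latency (fun x y => edist x y) (fun _ => u) v = 0 :=
        fun v => latency_const u v
      simp [hlat]
    refine ⟨fun _ => u, 1, one_pos, by nlinarith, fun i => rfl, ?_, ?_⟩
    · intro v N; exact ⟨N, le_rfl, (hsub v).symm⟩
    · rw [hcost0]; exact zero_le
  push_neg at hsub
  obtain ⟨x0, hx0⟩ := hsub
  by_cases hrT : OPT (fun x y => edist x y) φ = ⊤
  · -- infinite optimum: any periodic walk works
    set L := Finset.univ.toList (α := V) with hL
    have hlen : L.length = Fintype.card V := Finset.length_toList _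
    have hlpos : 0 < L.length := by rw [hlen]; exact Fintype.card_pos
    refine ⟨fun i => L.getD (i % L.length) u, L.length, hlpos, ?_, ?_, ?_, ?_⟩
    · rw [hlen]; nlinarith
    · intro i; simp only [Nat.add_mod_right]
    · intro v N
      have hvL : v ∈ L := by rw [hL]; exact Finset.mem_toList.mpr (Finset.mem_univ v)
      obtain ⟨⟨t, ht⟩, hget⟩ := List.mem_iff_get.mp hvL
      refine ⟨t + L.length * N, ?_, ?_⟩
      · have := Nat.le_mul_of_pos_left N hlpos; omega
      · show L.getD ((t + L.length * N) % L.length) u = v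
        rw [Nat.add_mul_mod_self_left, Nat.mod_eq_of_lt ht, List.getD_eq_getElem L u ht]
        exact hget
    · rw [hrT]
      refine le_trans le_top (le_of_eq ?_)
      rw [ENNReal.mul_top (by norm_num)]
  -- main case
  have hrpos : (0 : ℝ≥0∞) < OPT (fun x y => edist x y) φ := by
    have hlow : 2 * edist u x0 ≤ OPT (fun x y => edist x y) φ := by
      show 2 * edist u x0 ≤
        ⨅ (W : ℕ → V) (_ : VisitsInfOften W), walkCost (fun x y => edist x y) φ W
      refine le_iInf fun W => le_iInf fun hW => ?_
      calc 2 * edist u x0 ≤ latency (fun x y => edist x y) W u :=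
            excursion_lb W hW u x0 hx0
        _ = φ u * latency (fun x y => edist x y) W u := by rw [hu, one_mul]
        _ ≤ walkCost (fun x y => edist x y) φ W :=
            le_iSup (fun v => φ v * latency (fun x y => edist x y) W v) u
    have hed : (0 : ℝ≥0∞) < 2 * edist u x0 := by
      refine ENNReal.mul_pos (by norm_num) ?_
      exact (edist_pos.mpr (Ne.symm hx0)).ne'
    exact lt_of_lt_of_le hed hlow
  have hr0 : OPT (fun x y => edist x y) φ ≠ 0 := hrpos.ne'
  set r := OPT (fun x y => edist x y) φ with hrdef
  set q : ℝ≥0∞ := 101 * r / 10000 with hqdef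
  have hrmulT : (101 : ℝ≥0∞) * r ≠ ⊤ := ENNReal.mul_ne_top (by norm_num) hrT
  have hq0 : q ≠ 0 := by
    rw [hqdef, Ne, ENNReal.div_eq_zero_iff]
    push_neg
    exact ⟨mul_ne_zero (by norm_num) hr0, by norm_num⟩
  have hqT : q ≠ ⊤ := by
    rw [hqdef, Ne, ENNReal.div_eq_top]
    push_neg
    exact ⟨fun _ => by norm_num, fun ha => absurd ha hrmulT⟩
  have hq10000 : (10000 : ℝ≥0∞) * q = 101 * r := by
    rw [hqdef]
    exact ENNReal.mul_div_cancel' (by norm_num) (by norm_num)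
  have hr_lt : r < 100 * q := by
    by_contra hc
    push_neg at hc
    have h1 : (100 : ℝ≥0∞) * (100 * q) ≤ 100 * r := mul_le_mul_right hc _
    have h2 : (100 : ℝ≥0∞) * (100 * q) = 10000 * q := by ring
    rw [h2, hq10000] at h1
    have h3 : (100 : ℝ≥0∞) * r < 101 * r :=
      (ENNReal.mul_lt_mul_iff_left hr0 hrT).mpr (by norm_num)
    exact absurd h1 (not_le.mpr h3)
  have h582 : 582 * q ≤ 6 * r := by
    have h1 : (10000 : ℝ≥0∞) * (582 * q) = 58782 * r := by
      rw [show (10000 : ℝ≥0∞) * (582 * q) = 582 * (10000 * q) by ring, hq10000]; ring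
    have h2 : (10000 : ℝ≥0∞) * (6 * r) = 60000 * r := by ring
    refine (ENNReal.mul_le_mul_iff_right (a := (10000 : ℝ≥0∞)) (by norm_num) (by norm_num)).mp ?_
    rw [h1, h2]
    exact mul_le_mul_left (by norm_num) _
  -- extract a near-optimal walk
  have hOPTlt : (⨅ (W : ℕ → V) (_ : VisitsInfOften W),
      walkCost (fun x y => edist x y) φ W) < 100 * q := hr_lt
  obtain ⟨f, hf⟩ := iInf_lt_iff.mp hOPTlt
  obtain ⟨hVIO, hcost⟩ := iInf_lt_iff.mp hf
  have hφ0 : ∀ v : V, φ v ≠ 0 := fun v => (hφ v).1.ne'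
  have hφT : ∀ v : V, φ v ≠ ⊤ := fun v =>
    (lt_of_le_of_lt (hφ v).2 (by norm_num : (1:ℝ≥0∞) < ⊤)).ne
  have h100qT : (100 : ℝ≥0∞) * q ≠ ⊤ := ENNReal.mul_ne_top (by norm_num) hqT
  set g : V → ℝ≥0∞ := fun v => (100 * q) / φ v with hgdef
  have hphig : ∀ v, φ v * g v = 100 * q := fun v =>
    ENNReal.mul_div_cancel (hφ0 v) (hφT v)
  have hgq : ∀ v, 100 * q ≤ g v := by
    intro v
    rw [hgdef]
    rw [ENNReal.le_div_iff_mul_le (Or.inl (hφ0 v)) (Or.inl (hφT v))]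
    calc 100 * q * φ v ≤ 100 * q * 1 := mul_le_mul_right (hφ v).2 _
      _ = 100 * q := mul_one _
  have hgT : ∀ v, g v ≠ ⊤ := by
    intro v
    rw [hgdef, Ne, ENNReal.div_eq_top]
    push_neg
    exact ⟨fun _ => hφ0 v, fun h => absurd h h100qT⟩
  have hgu : g u ≤ 100 * q := by
    show (100 * q) / φ u ≤ 100 * q
    rw [hu, div_one]
  have hlat : ∀ v, latency (fun x y => edist x y) f v < g v := by
    intro v
    have h1 : φ v * latency (fun x y => edist x y) f v < φ v * g v := by
      rw [hphig v]
      exact lt_of_le_of_lt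
        (le_iSup (fun w => φ w * latency (fun x y => edist x y) f w) v) hcost
    exact (ENNReal.mul_lt_mul_iff_right (hφ0 v) (hφT v)).mp h1
  have hret : ∀ v a, f a = v → ∃ b, a < b ∧ f b = v ∧
      walkLen (fun x y => edist x y) f a b ≤ g v := by
    intro v a ha
    obtain ⟨b, h1, h2, h3⟩ := return_of_latency_lt _ f (hlat v) ha
    exact ⟨b, h1, h2, h3.le⟩
  set a0 : ℕ := Finset.univ.sup (fun v : V => (hVIO v 0).choose) with ha0def
  have ha0 : ∀ v : V, ∃ t, t ≤ a0 ∧ f t = v := by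
    intro v
    exact ⟨(hVIO v 0).choose,
      Finset.le_sup (f := fun v : V => (hVIO v 0).choose) (Finset.mem_univ v),
      (hVIO v 0).choose_spec.2⟩
  have hball : ∀ x : V, 2 * edist u x ≤ 100 * q := by
    intro x
    by_cases hxu : x = u
    · rw [hxu, edist_self, mul_zero]; exact zero_le
    · have h1 : 2 * edist u x ≤ latency (fun x y => edist x y) f u :=
        excursion_lb f hVIO u x hxu
      have h2 : latency (fun x y => edist x y) f u < g u := hlat u
      have h3 : g u = 100 * q := by
        show (100 * q) / φ u = 100 * q
        rw [hu, div_one]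
      exact le_trans h1 (le_trans h2.le h3.le)
  set St : BGTSetup V :=
    { f := f, u := u, φ := φ, g := g, q := q,
      hq0 := hq0, hqT := hqT, a0 := a0, ha0 := ha0,
      hgq := hgq, hgT := hgT, hgu := hgu,
      hphi1 := fun v => (hφ v).2,
      hphig := fun v => (hphig v).le,
      hwin := fun v a ha => window_visit f hret ha0 v a ha,
      hball := hball,
      hmove := reach_lb f hVIO u x0 hx0 } with hStdef
  refine ⟨St.Wp, 2 * St.M, by have := St.M_pos; omega, St.p_bound, St.Wp_periodic,
    St.Wp_VIO, ?_⟩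
  calc walkCost (fun x y => edist x y) φ St.Wp ≤ 582 * q := St.walkCost_le
    _ ≤ 6 * r := h582
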